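/- Let w₁ be a word of length p over A and w₂ a word of length q over A such that the fundamental intervals Δ(w₁) and Δ(w₂) are full (of ranks p and q respectively). Then the concatenated word w₁w₂ gives a full fundamental interval of rank p + q, i.e. λ(Δ(w₁w₂)) = a₁/β^{p+q}. -/

import Mathlib

open MeasureTheory Set

/-- The greedy β-transformation with deleted digit set `{0, a₁, a₂}`:
`T x = βx` on `Δ(0) = [0, a₁/β)`, `T x = βx − a₁` on `Δ(a₁) = [a₁/β, a₂/β)`,
and `T x = βx − a₂` on `Δ(a₂) = [a₂/β, a₁)`. -/
noncomputable def greedyT (β a₁ a₂ : ℝ) (x : ℝ) : ℝ :=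
  if x < a₁ / β then β * x
  else if x < a₂ / β then β * x - a₁
  else β * x - a₂

/-- The interval `Δ(b)` associated to a digit `b ∈ {0, a₁, a₂}`. -/
noncomputable def digitInt (β a₁ a₂ : ℝ) (b : ℝ) : Set ℝ :=
  if b = 0 then Set.Ico 0 (a₁ / β)
  else if b = a₁ then Set.Ico (a₁ / β) (a₂ / β)
  else Set.Ico (a₂ / β) a₁

/-- The fundamental interval `Δ(w) = ⋂_{k < n} T⁻ᵏ Δ(b_k)` of a word
`w = (b₀, …, b_{n−1})`. -/
noncomputable def cyl (β a₁ a₂ : ℝ) (w : List ℝ) : Set ℝ :=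
  ⋂ k ∈ Finset.range w.length,
    (greedyT β a₁ a₂)^[k] ⁻¹' digitInt β a₁ a₂ (w.getD k 0)

/-- `w` is a word over the alphabet `A = {0, a₁, a₂}`. -/
def isWord (a₁ a₂ : ℝ) (w : List ℝ) : Prop := ∀ b ∈ w, b = 0 ∨ b = a₁ ∨ b = a₂

/-- The fundamental interval `Δ(w)` is full: `λ(Δ(w)) = a₁/β^|w|`. -/
def isFull (β a₁ a₂ : ℝ) (w : List ℝ) : Prop :=
  volume (cyl β a₁ a₂ w) = ENNReal.ofReal (a₁ / β ^ w.length)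

/-- Condition (6): `a₁ · max (β−1) 1 < a₂ < a₁ · min 2 β`. -/
def condition6 (β a₁ a₂ : ℝ) : Prop :=
  a₁ * max (β - 1) 1 < a₂ ∧ a₂ < a₁ * min 2 β

/-- `w ∈ Bₙ`: `w` is a word of length `n` over `A` with `λ(Δ(w)) > 0`, `Δ(w)`
non-full, and `Δ(w′)` non-full for every nonempty proper prefix `w′` of `w`. -/
def memB (β a₁ a₂ : ℝ) (n : ℕ) (w : List ℝ) : Prop :=
  w.length = n ∧ isWord a₁ a₂ w ∧ 0 < volume (cyl β a₁ a₂ w) ∧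
    ¬ isFull β a₁ a₂ w ∧
    ∀ w' : List ℝ, w' ≠ [] → w' <+: w → w' ≠ w → ¬ isFull β a₁ a₂ w'

/-- `κ(n)`: the number of elements of `Bₙ`. -/
noncomputable def kappa (β a₁ a₂ : ℝ) (n : ℕ) : ℕ :=
  {w : List ℝ | memB β a₁ a₂ n w}.ncard

section Aux

variable {β a₁ a₂ : ℝ}

lemma cyl_nil : cyl β a₁ a₂ [] = Set.univ := by
  simp [cyl]

lemma cyl_cons (b : ℝ) (w : List ℝ) :
    cyl β a₁ a₂ (b :: w) =
      digitInt β a₁ a₂ b ∩ (greedyT β a₁ a₂) ⁻¹' cyl β a₁ a₂ w := by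
  ext x
  simp only [cyl, Set.mem_iInter, Finset.mem_range, Set.mem_inter_iff,
    Set.mem_preimage, List.length_cons]
  constructor
  · intro h
    refine ⟨by simpa using h 0 (Nat.succ_pos _), fun k hk => ?_⟩
    have := h (k + 1) (Nat.succ_lt_succ hk)
    simpa [Function.iterate_succ_apply] using this
  · rintro ⟨h0, h1⟩ k hk
    cases k with
    | zero => simpa using h0
    | succ k =>
      have := h1 k (Nat.lt_of_succ_lt_succ hk)
      simpa [Function.iterate_succ_apply] using this

lemma cyl_append (u v : List ℝ) :
    cyl β a₁ a₂ (u ++ v) =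
      cyl β a₁ a₂ u ∩ (greedyT β a₁ a₂)^[u.length] ⁻¹' cyl β a₁ a₂ v := by
  induction u with
  | nil => simp [cyl_nil]
  | cons b u ih =>
    rw [List.cons_append, cyl_cons, ih, cyl_cons, List.length_cons]
    ext x
    simp only [Set.mem_inter_iff, Set.mem_preimage, Function.iterate_succ_apply]
    tauto

lemma Tmem (hβ1 : 1 < β) (ha₁ : 0 < a₁) (h12 : a₁ < a₂) (hc : condition6 β a₁ a₂)
    {x : ℝ} (hx : x ∈ Set.Ico 0 a₁) : greedyT β a₁ a₂ x ∈ Set.Ico 0 a₁ := by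
  have hβ0 : (0:ℝ) < β := by linarith
  have h2 : a₂ < 2 * a₁ := by
    have h := hc.2
    have hmin : a₁ * min 2 β ≤ a₁ * 2 :=
      mul_le_mul_of_nonneg_left (min_le_left _ _) ha₁.le
    linarith
  have hβa : (β - 1) * a₁ < a₂ := by
    have h := hc.1
    have hmax : a₁ * (β - 1) ≤ a₁ * max (β - 1) 1 :=
      mul_le_mul_of_nonneg_left (le_max_left _ _) ha₁.le
    nlinarith
  obtain ⟨hx0, hx1⟩ := hx
  unfold greedyT
  split_ifs with h1 h2'
  · have := (lt_div_iff₀ hβ0).mp h1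
    constructor
    · positivity
    · linarith
  · have hl := (div_le_iff₀ hβ0).mp (le_of_not_gt h1)
    have hu := (lt_div_iff₀ hβ0).mp h2'
    constructor <;> linarith
  · have hl := (div_le_iff₀ hβ0).mp (le_of_not_gt h2')
    have : β * x < β * a₁ := by nlinarith
    constructor <;> nlinarith

lemma Titer (hβ1 : 1 < β) (ha₁ : 0 < a₁) (h12 : a₁ < a₂) (hc : condition6 β a₁ a₂)
    (n : ℕ) {x : ℝ} (hx : x ∈ Set.Ico 0 a₁) :
    (greedyT β a₁ a₂)^[n] x ∈ Set.Ico 0 a₁ := by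
  induction n with
  | zero => simpa using hx
  | succ n ih =>
    rw [Function.iterate_succ_apply']
    exact Tmem hβ1 ha₁ h12 hc ih

lemma digit_struct (hβ1 : 1 < β) (ha₁ : 0 < a₁) (h12 : a₁ < a₂) (hc : condition6 β a₁ a₂)
    {b : ℝ} (hb : b = 0 ∨ b = a₁ ∨ b = a₂) :
    ∃ u v : ℝ, digitInt β a₁ a₂ b = Set.Ico u v ∧ Set.Ico u v ⊆ Set.Ico 0 a₁ ∧
      ∀ x ∈ Set.Ico u v, greedyT β a₁ a₂ x = β * x - b := by
  have hβ0 : (0:ℝ) < β := by linarith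
  have ha₂ : (0:ℝ) < a₂ := lt_trans ha₁ h12
  have hβa : a₂ < β * a₁ := by
    have h := hc.2
    have hmin : a₁ * min 2 β ≤ a₁ * β :=
      mul_le_mul_of_nonneg_left (min_le_right _ _) ha₁.le
    nlinarith
  rcases hb with hb | hb | hb
  · refine ⟨0, a₁ / β, by simp [digitInt, hb], ?_, ?_⟩
    · exact Set.Ico_subset_Ico le_rfl (div_le_self ha₁.le hβ1.le)
    · intro x hx
      rw [hb]
      unfold greedyT
      rw [if_pos hx.2]
      ring
  · refine ⟨a₁ / β, a₂ / β, by simp [digitInt, hb, ha₁.ne'], ?_, ?_⟩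
    · intro x hx
      refine ⟨le_trans (by positivity) hx.1, lt_trans hx.2 ?_⟩
      rw [div_lt_iff₀ hβ0]
      linarith
    · intro x hx
      rw [hb]
      unfold greedyT
      rw [if_neg (not_lt.mpr hx.1), if_pos hx.2]
  · refine ⟨a₂ / β, a₁, by simp [digitInt, hb, ha₂.ne', (ne_of_gt h12)], ?_, ?_⟩
    · intro x hx
      exact ⟨le_trans (by positivity) hx.1, hx.2⟩
    · intro x hx
      have h1 : a₁ / β ≤ a₂ / β := (div_le_div_iff_of_pos_right hβ0).mpr h12.le
      rw [hb]
      unfold greedyT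
      rw [if_neg (not_lt.mpr (le_trans h1 hx.1)), if_neg (not_lt.mpr hx.1)]

lemma struct (hβ1 : 1 < β) (ha₁ : 0 < a₁) (h12 : a₁ < a₂) (hc : condition6 β a₁ a₂)
    {w : List ℝ} (hw : isWord a₁ a₂ w) (hne : w ≠ []) :
    ∃ l r c : ℝ, cyl β a₁ a₂ w = Set.Ico l r ∧ Set.Ico l r ⊆ Set.Ico 0 a₁ ∧
      ∀ x ∈ Set.Ico l r,
        (greedyT β a₁ a₂)^[w.length] x = β ^ w.length * x - c := by
  have hβ0 : (0:ℝ) < β := by linarith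
  induction w with
  | nil => exact absurd rfl hne
  | cons b w ih =>
    obtain ⟨u, v, hduv, hdsub, hT⟩ :=
      digit_struct hβ1 ha₁ h12 hc (hw b List.mem_cons_self)
    by_cases hw0 : w = []
    · subst hw0
      refine ⟨u, v, b, ?_, hdsub, ?_⟩
      · rw [cyl_cons, cyl_nil, Set.preimage_univ, Set.inter_univ, hduv]
      · intro x hx
        simpa using hT x hx
    · obtain ⟨l, r, c, hcyl, hsub, hform⟩ :=
        ih (fun d hd => hw d (List.mem_cons_of_mem b hd)) hw0
      have hβn : (0:ℝ) < β ^ w.length := by positivity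
      refine ⟨max u ((l + b) / β), min v ((r + b) / β), β ^ w.length * b + c,
        ?_, ?_, ?_⟩
      · rw [cyl_cons, hduv, hcyl]
        ext x
        simp only [Set.mem_inter_iff, Set.mem_preimage, Set.mem_Ico,
          max_le_iff, lt_min_iff]
        constructor
        · rintro ⟨hx, hTx⟩
          rw [hT x hx] at hTx
          refine ⟨⟨hx.1, ?_⟩, hx.2, ?_⟩
          · rw [div_le_iff₀ hβ0]; linarith [hTx.1]
          · rw [lt_div_iff₀ hβ0]; linarith [hTx.2]
        · rintro ⟨⟨hu, hl⟩, hv, hr⟩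
          rw [div_le_iff₀ hβ0] at hl
          rw [lt_div_iff₀ hβ0] at hr
          refine ⟨⟨hu, hv⟩, ?_⟩
          rw [hT x ⟨hu, hv⟩]
          exact ⟨by linarith, by linarith⟩
      · intro x hx
        exact hdsub ⟨le_trans (le_max_left _ _) hx.1,
          lt_of_lt_of_le hx.2 (min_le_left _ _)⟩
      · intro x hx
        have hu : u ≤ x := le_trans (le_max_left _ _) hx.1
        have hv : x < v := lt_of_lt_of_le hx.2 (min_le_left _ _)
        have hl : (l + b) / β ≤ x := le_trans (le_max_right _ _) hx.1
        have hr : x < (r + b) / β := lt_of_lt_of_le hx.2 (min_le_right _ _)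
        rw [div_le_iff₀ hβ0] at hl
        rw [lt_div_iff₀ hβ0] at hr
        have hTx : greedyT β a₁ a₂ x = β * x - b := hT x ⟨hu, hv⟩
        have hTmem : greedyT β a₁ a₂ x ∈ Set.Ico l r := by
          rw [hTx]; exact ⟨by linarith, by linarith⟩
        rw [List.length_cons, Function.iterate_succ_apply,
          hform _ hTmem, hTx, pow_succ]
        ring

lemma full_struct (hβ1 : 1 < β) (ha₁ : 0 < a₁) (h12 : a₁ < a₂)
    (hc : condition6 β a₁ a₂) {w : List ℝ} {l r c : ℝ}
    (hcyl : cyl β a₁ a₂ w = Set.Ico l r) (hsub : Set.Ico l r ⊆ Set.Ico 0 a₁)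
    (hform : ∀ x ∈ Set.Ico l r,
      (greedyT β a₁ a₂)^[w.length] x = β ^ w.length * x - c)
    (hf : isFull β a₁ a₂ w) :
    r - l = a₁ / β ^ w.length ∧ β ^ w.length * l - c = 0 ∧
      β ^ w.length * r - c = a₁ := by
  have hβ0 : (0:ℝ) < β := by linarith
  have hβn : (0:ℝ) < β ^ w.length := by positivity
  have hpos : 0 < a₁ / β ^ w.length := by positivity
  have hvol : ENNReal.ofReal (r - l) = ENNReal.ofReal (a₁ / β ^ w.length) := by
    rw [← Real.volume_Ico, ← hcyl]; exact hf
  have hrl : r - l = a₁ / β ^ w.length := by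
    by_cases h : 0 ≤ r - l
    · exact (ENNReal.ofReal_eq_ofReal_iff h hpos.le).mp hvol
    · exfalso
      rw [ENNReal.ofReal_eq_zero.mpr (le_of_not_ge h)] at hvol
      exact (ENNReal.ofReal_pos.mpr hpos).ne' hvol.symm
  have hlr : l < r := by linarith
  have hlmem : l ∈ Set.Ico l r := ⟨le_rfl, hlr⟩
  have hl0 : (greedyT β a₁ a₂)^[w.length] l ∈ Set.Ico 0 a₁ :=
    Titer hβ1 ha₁ h12 hc _ (hsub hlmem)
  rw [hform l hlmem] at hl0
  have hrub : β ^ w.length * r - c ≤ a₁ := by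
    by_contra hcon
    push_neg at hcon
    have hxr : (a₁ + c) / β ^ w.length < r := by
      rw [div_lt_iff₀ hβn]; linarith
    set x := max l ((a₁ + c) / β ^ w.length) with hxdef
    have hxmem : x ∈ Set.Ico l r := ⟨le_max_left _ _, max_lt hlr hxr⟩
    have hxbig : a₁ ≤ β ^ w.length * x - c := by
      have : (a₁ + c) / β ^ w.length ≤ x := le_max_right _ _
      rw [div_le_iff₀ hβn] at this
      linarith
    have hsmall : (greedyT β a₁ a₂)^[w.length] x ∈ Set.Ico 0 a₁ :=
      Titer hβ1 ha₁ h12 hc _ (hsub hxmem)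
    rw [hform x hxmem] at hsmall
    linarith [hsmall.2]
  have hdiff : β ^ w.length * r - β ^ w.length * l = a₁ := by
    have : β ^ w.length * (r - l) = a₁ := by
      rw [hrl]; field_simp
    linarith [this]
  refine ⟨hrl, by linarith [hl0.1], by linarith [hl0.1]⟩

end Aux

/-- If `Δ(w₁)` and `Δ(w₂)` are full fundamental intervals of ranks
`p` and `q`, then the concatenated word `w₁w₂` gives a full fundamental
interval of rank `p + q`, i.e. `λ(Δ(w₁w₂)) = a₁/β^(p+q)`. -/
theorem stmt4 (β a₁ a₂ : ℝ) (hβ1 : 1 < β) (hβ3 : β < 3)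
    (ha₁ : 0 < a₁) (h12 : a₁ < a₂) (hc : condition6 β a₁ a₂)
    (p q : ℕ) (w₁ w₂ : List ℝ) (hw₁ : isWord a₁ a₂ w₁) (hw₂ : isWord a₁ a₂ w₂)
    (hl₁ : w₁.length = p) (hl₂ : w₂.length = q)
    (hf₁ : isFull β a₁ a₂ w₁) (hf₂ : isFull β a₁ a₂ w₂) :
    volume (cyl β a₁ a₂ (w₁ ++ w₂)) = ENNReal.ofReal (a₁ / β ^ (p + q)) := by
  subst hl₁; subst hl₂
  have hβ0 : (0:ℝ) < β := by linarith
  have hβp : (0:ℝ) < β ^ w₁.length := by positivity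
  have hne₁ : w₁ ≠ [] := by
    rintro rfl
    simp only [isFull, cyl_nil, Real.volume_univ] at hf₁
    exact ENNReal.ofReal_ne_top hf₁.symm
  have hne₂ : w₂ ≠ [] := by
    rintro rfl
    simp only [isFull, cyl_nil, Real.volume_univ] at hf₂
    exact ENNReal.ofReal_ne_top hf₂.symm
  obtain ⟨l₁, r₁, c₁, hcyl₁, hsub₁, hform₁⟩ := struct hβ1 ha₁ h12 hc hw₁ hne₁
  obtain ⟨l₂, r₂, c₂, hcyl₂, hsub₂, hform₂⟩ := struct hβ1 ha₁ h12 hc hw₂ hne₂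
  obtain ⟨hrl₁, hle₁, hre₁⟩ := full_struct hβ1 ha₁ h12 hc hcyl₁ hsub₁ hform₁ hf₁
  obtain ⟨hrl₂, hle₂, hre₂⟩ := full_struct hβ1 ha₁ h12 hc hcyl₂ hsub₂ hform₂ hf₂
  have hq : (0:ℝ) < a₁ / β ^ w₂.length := by positivity
  have hl₂r : l₂ < r₂ := by linarith
  have hl₂0 : 0 ≤ l₂ := (hsub₂ ⟨le_rfl, hl₂r⟩).1
  have hr₂a : r₂ ≤ a₁ := by
    by_contra hcon
    push_neg at hcon
    have hmem : max l₂ a₁ ∈ Set.Ico l₂ r₂ := ⟨le_max_left _ _, max_lt hl₂r hcon⟩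
    have := (hsub₂ hmem).2
    have := le_max_right l₂ a₁
    linarith
  have key : cyl β a₁ a₂ (w₁ ++ w₂) =
      Set.Ico ((l₂ + c₁) / β ^ w₁.length) ((r₂ + c₁) / β ^ w₁.length) := by
    rw [cyl_append, hcyl₁, hcyl₂]
    ext x
    simp only [Set.mem_inter_iff, Set.mem_preimage, Set.mem_Ico]
    constructor
    · rintro ⟨hx, hTx⟩
      rw [hform₁ x hx] at hTx
      constructor
      · rw [div_le_iff₀ hβp]; linarith [hTx.1]
      · rw [lt_div_iff₀ hβp]; linarith [hTx.2]
    · rintro ⟨hA, hB⟩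
      rw [div_le_iff₀ hβp] at hA
      rw [lt_div_iff₀ hβp] at hB
      have hx : x ∈ Set.Ico l₁ r₁ := by
        constructor
        · have h1 : β ^ w₁.length * l₁ ≤ β ^ w₁.length * x := by
            nlinarith [hA, hle₁, hl₂0]
          exact le_of_mul_le_mul_left h1 hβp
        · have h1 : β ^ w₁.length * x < β ^ w₁.length * r₁ := by
            nlinarith [hB, hre₁, hr₂a]
          exact lt_of_mul_lt_mul_left h1 hβp.le
      refine ⟨hx, ?_⟩
      rw [hform₁ x hx]
      refine ⟨by nlinarith [hA], by nlinarith [hB]⟩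
  rw [key, Real.volume_Ico]
  congr 1
  rw [div_sub_div_same]
  have h1 : r₂ + c₁ - (l₂ + c₁) = r₂ - l₂ := by ring
  rw [h1, hrl₂, div_div, pow_add, mul_comm]
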